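/- Let L_n ⊆ S_n be a zigzag language and let π, ρ, σ be three consecutive permutations in J(L_n). If ρ is obtained from π by a jump of the value n and σ is obtained from ρ by a jump of the value n, then s_{n,i}^ρ = s_{n,i}^π for all i = 1,…,n−1. -/

import Mathlib

/-!
Shared definitions: permutations in one-line notation as lists of naturals,
deletion `p`, insertion `c_i`, zigzag languages, the Gray code sequence `J(L_n)`,
jumps, minimal jumps, the auxiliary sequences `s_n^π`, Algorithm M,
vincular pattern containment and 2-clumped permutations.
-/

/-- `S_n`: permutations of `{1,…,n}` in one-line notation, as lists of naturals. -/
def SymmList (n : ℕ) : Set (List ℕ) := {l | List.Perm l (List.range' 1 n)}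

/-- The identity permutation `id_n = 1 2 ⋯ n`. -/
def idPerm (n : ℕ) : List ℕ := List.range' 1 n

/-- `p(π)`: delete the largest entry `n = π.length` from the permutation `π ∈ S_n`. -/
def pdel (l : List ℕ) : List ℕ := l.erase l.length

/-- `c_i(π)`: insert the new largest value `π.length + 1` at (1-indexed) position `i`. -/
def cins (i : ℕ) (l : List ℕ) : List ℕ :=
  l.take (i - 1) ++ (l.length + 1) :: l.drop (i - 1)

/-- Zigzag languages of permutations: `L_0 = {ε}` is a zigzag language, and
`L ⊆ S_{n+1}` is a zigzag language if `p(L)` is a zigzag language and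
`c_1(π), c_{n+1}(π) ∈ L` for every `π ∈ p(L)`. -/
inductive IsZigzag : ℕ → Set (List ℕ) → Prop
  | zero : IsZigzag 0 {[]}
  | succ (n : ℕ) (L : Set (List ℕ)) :
      L ⊆ SymmList (n + 1) →
      IsZigzag n (pdel '' L) →
      (∀ l ∈ pdel '' L, cins 1 l ∈ L ∧ cins (n + 1) l ∈ L) →
      IsZigzag (n + 1) L

/-- `→c(π)`: the sequence of those `c_1(π),…,c_n(π)` lying in `L`,
in increasing order of the insertion position. -/
noncomputable def cSeq (L : Set (List ℕ)) (n : ℕ) (l : List ℕ) : List (List ℕ) :=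
  ((List.range' 1 n).map (fun i => cins i l)).filter
    (fun x => @decide (x ∈ L) (Classical.propDecidable _))

/-- The Gray code sequence `J(L_n)` of a language `L ⊆ S_n`:
`J(L_0) = ε`, and `J(L_{n+1})` is obtained from `J(L_n)` (for the language
`p(L)`) by replacing its entries alternately by `←c(π)` (the reverse of
`→c(π)`) and `→c(π)`. -/
noncomputable def Jseq : ℕ → Set (List ℕ) → List (List ℕ)
  | 0, _ => [[]]
  | (n + 1), L =>
      (((Jseq n (pdel '' L)).mapIdx
        (fun k π => if k % 2 = 0 then (cSeq L (n + 1) π).reverse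
                    else cSeq L (n + 1) π)).flatten)

/-- `ρ` is obtained from `π` by a right jump of the value `v` by `d` steps. -/
def RightJump (π ρ : List ℕ) (v d : ℕ) : Prop :=
  0 < d ∧ ∃ A B C : List ℕ, B.length = d ∧ (∀ x ∈ B, x < v) ∧
    π = A ++ v :: (B ++ C) ∧ ρ = A ++ (B ++ v :: C)

/-- `ρ` is obtained from `π` by a left jump of the value `v` by `d` steps. -/
def LeftJump (π ρ : List ℕ) (v d : ℕ) : Prop := RightJump ρ π v d

/-- A right jump that is minimal with respect to `L`: every right jump of the
same value by fewer steps yields a permutation not in `L`. -/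
def MinimalRightJump (L : Set (List ℕ)) (π ρ : List ℕ) (v d : ℕ) : Prop :=
  RightJump π ρ v d ∧ ∀ d' ρ', d' < d → RightJump π ρ' v d' → ρ' ∉ L

/-- A left jump that is minimal with respect to `L`. -/
def MinimalLeftJump (L : Set (List ℕ)) (π ρ : List ℕ) (v d : ℕ) : Prop :=
  LeftJump π ρ v d ∧ ∀ d' ρ', d' < d → LeftJump π ρ' v d' → ρ' ∉ L

/-- The auxiliary sequence `s_n^π` of a permutation `π` occurring in `J(L_n)`,
as a function of the index `i ∈ {1,…,n}` (value `0` outside this range). -/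
noncomputable def sVec : ℕ → Set (List ℕ) → List ℕ → ℕ → ℕ
  | 0, _, _, _ => 0
  | 1, _, _, i => if i = 1 then 1 else 0
  | (n + 2), L, π, i =>
      let L' := pdel '' L
      let π' := pdel π
      let cbar := if ((Jseq (n + 1) L').idxOf π') % 2 = 0
                  then (cSeq L (n + 2) π').reverse else cSeq L (n + 2) π'
      if cbar.getLast? = some π then
        (if i ≤ n then sVec (n + 1) L' π' i
         else if i = n + 1 then n + 1
         else if i = n + 2 then sVec (n + 1) L' π' (n + 1) else 0)
      else
        (if i ≤ n + 1 then sVec (n + 1) L' π' i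
         else if i = n + 2 then n + 2 else 0)

/-- `j` is at the first position of `l`, or the entry immediately left of `j`
in `l` is larger than `j`. -/
def AtLeftTurn (l : List ℕ) (j : ℕ) : Prop :=
  ∃ A B : List ℕ, l = A ++ j :: B ∧ (A = [] ∨ ∃ x, A.getLast? = some x ∧ j < x)

/-- `j` is at the last position of `l`, or the entry immediately right of `j`
in `l` is larger than `j`. -/
def AtRightTurn (l : List ℕ) (j : ℕ) : Prop :=
  ∃ A B : List ℕ, l = A ++ j :: B ∧ (B = [] ∨ ∃ x, B.head? = some x ∧ j < x)

/-- `j` is not at the first position of `l`, and the entry immediately left of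
`j` in `l` is smaller than `j`. -/
def SmallerLeftNeighbor (l : List ℕ) (j : ℕ) : Prop :=
  ∃ A B : List ℕ, ∃ x, l = A ++ j :: B ∧ A.getLast? = some x ∧ x < j

/-- `j` is not at the last position of `l`, and the entry immediately right of
`j` in `l` is smaller than `j`. -/
def SmallerRightNeighbor (l : List ℕ) (j : ℕ) : Prop :=
  ∃ A B : List ℕ, ∃ x, l = A ++ j :: B ∧ B.head? = some x ∧ x < j

/-- A state of Algorithm M: the current permutation `π` and the auxiliary
arrays `o` and `s`; `o j = false` encodes direction `L` (left) and
`o j = true` encodes `R` (right). -/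
structure MState where
  perm : List ℕ
  o : ℕ → Bool
  s : ℕ → ℕ

/-- The initial state of Algorithm M (step M1): `π = id_n`, `o_j = L`, `s_j = j`. -/
def MInit (n : ℕ) : MState := ⟨idPerm n, fun _ => false, fun j => j⟩

/-- One iteration (steps M3–M5) of Algorithm M on a language `L ⊆ S_n`:
with `j := s_n ≠ 1`, the permutation jumps minimally in the direction `o_j`
(step M4), and the arrays `o`, `s` are updated as in step M5. -/
def MStep (L : Set (List ℕ)) (n : ℕ) (σ σ' : MState) : Prop :=
  σ.s n ≠ 1 ∧
  σ'.perm ∈ L ∧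
  ((σ.o (σ.s n) = false ∧ ∃ d, MinimalLeftJump L σ.perm σ'.perm (σ.s n) d) ∨
   (σ.o (σ.s n) = true ∧ ∃ d, MinimalRightJump L σ.perm σ'.perm (σ.s n) d)) ∧
  (((σ.o (σ.s n) = false ∧ AtLeftTurn σ'.perm (σ.s n)) ∨
    (σ.o (σ.s n) = true ∧ AtRightTurn σ'.perm (σ.s n))) →
      σ'.o = Function.update σ.o (σ.s n) (!σ.o (σ.s n)) ∧
      σ'.s = Function.update (Function.update (Function.update σ.s n n) (σ.s n)
               ((Function.update σ.s n n) (σ.s n - 1))) (σ.s n - 1) (σ.s n - 1)) ∧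
  (¬ ((σ.o (σ.s n) = false ∧ AtLeftTurn σ'.perm (σ.s n)) ∨
      (σ.o (σ.s n) = true ∧ AtRightTurn σ'.perm (σ.s n))) →
      σ'.o = σ.o ∧ σ'.s = Function.update σ.s n n)

/-- `π` contains the vincular pattern `pat` whose marked adjacent pair starts
at (0-indexed) position `k` of `pat`. -/
def ContainsVincular (π pat : List ℕ) (k : ℕ) : Prop :=
  ∃ f : ℕ → ℕ, StrictMonoOn f (Set.Iio pat.length) ∧
    (∀ i < pat.length, f i < π.length) ∧
    f (k + 1) = f k + 1 ∧
    (∀ i < pat.length, ∀ j < pat.length,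
      (pat.getD i 0 < pat.getD j 0 ↔ π.getD (f i) 0 < π.getD (f j) 0))

/-- 2-clumped permutations: those avoiding the vincular patterns
`3(51)24`, `3(51)42`, `24(51)3` and `42(51)3`. -/
def TwoClumped (π : List ℕ) : Prop :=
  ¬ ContainsVincular π [3, 5, 1, 2, 4] 1 ∧ ¬ ContainsVincular π [3, 5, 1, 4, 2] 1 ∧
  ¬ ContainsVincular π [2, 4, 5, 1, 3] 2 ∧ ¬ ContainsVincular π [4, 2, 5, 1, 3] 2

/-- `S'_n`: the set of 2-clumped permutations in `S_n`. -/
def SClump (n : ℕ) : Set (List ℕ) := {l ∈ SymmList n | TwoClumped l}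

/-- `B_n`: the permutations obtained from `1` by repeatedly inserting the new
largest value at the first or the last position. -/
def Bset : ℕ → Set (List ℕ)
  | 0 => {[]}
  | 1 => {[1]}
  | (n + 2) => {l | ∃ π ∈ Bset (n + 1), l = cins 1 π ∨ l = cins (n + 2) π}


section Aux
open List

private lemma mem_of_getElem?' {α : Type*} {l : List α} {k : ℕ} {x : α}
    (h : l[k]? = some x) : x ∈ l := by
  obtain ⟨hk, rfl⟩ := List.getElem?_eq_some_iff.mp h
  exact List.getElem_mem _

private lemma symm_len {n : ℕ} {l : List ℕ} (h : l ∈ SymmList n) : l.length = n := by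
  simpa using h.length_eq

private lemma symm_mem {n x : ℕ} {l : List ℕ} (h : l ∈ SymmList n) (hx : x ∈ l) :
    1 ≤ x ∧ x < 1 + n := by
  have := h.subset hx
  simpa [List.mem_range'_1] using this

private lemma symm_not_mem_succ {n : ℕ} {l : List ℕ} (h : l ∈ SymmList n) : n + 1 ∉ l := by
  intro hx
  have := (symm_mem h hx).2
  omega

private lemma cins_length (i : ℕ) (l : List ℕ) : (cins i l).length = l.length + 1 := by
  simp [cins]
  omega

private lemma pdel_cins {l : List ℕ} (h : l.length + 1 ∉ l) (i : ℕ) : pdel (cins i l) = l := by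
  have ht : l.length + 1 ∉ l.take (i-1) := fun hm => h (List.mem_of_mem_take hm)
  rw [pdel, cins_length, cins, List.erase_append_right _ ht, List.erase_cons_head,
    List.take_append_drop]

private lemma cins_getElem_self {l : List ℕ} {i : ℕ} (h2 : i ≤ l.length + 1) :
    (cins i l)[i-1]? = some (l.length + 1) := by
  have ht : (l.take (i-1)).length = i - 1 := by simp; omega
  rw [cins, List.getElem?_append_right (by omega), ht]
  simp

private lemma cins_inj {l : List ℕ} (h : l.length 
    + 1 ∉ l) {i j : ℕ}
    (hi1 : 1 ≤ i) (hi2 : i ≤ l.length + 1) (hj1 : 1 ≤ j) (hj2 : j ≤ l.length + 1)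
    (he : cins i l = cins j l) : i = j := by
  by_contra hne
  wlog hlt : i < j generalizing i j
  · exact this hj1 hj2 hi1 hi2 he.symm (Ne.symm hne) (by omega)
  have e1 : (cins i l)[i-1]? = some (l.length + 1) := cins_getElem_self hi2
  have e2 : (cins j l)[i-1]? = l[i-1]? := by
    rw [cins, List.getElem?_append]
    rw [if_pos (by simp; omega), List.getElem?_take, if_pos (by omega)]
  rw [he, e2] at e1
  have hm : i - 1 < l.length := by omega
  rw [List.getElem?_eq_getElem hm] at e1
  have hmem : l[i-1] ∈ l := List.getElem_mem _
  rw [Option.some_inj.mp e1] at hmem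
  exact h hmem

private lemma zig_subset {n : ℕ} {L : Set (List ℕ)} (h : IsZigzag n L) : L ⊆ SymmList n := by
  cases h with
  | zero => rintro l rfl; simp [SymmList]
  | succ n L hs _ _ => exact hs

private lemma mem_cSeq {L : Set (List ℕ)} {n' : ℕ} {π' x : List ℕ} (h : x ∈ cSeq L n' π') :
    x ∈ L ∧ ∃ i, 1 ≤ i ∧ i ≤ n' ∧ x = cins i π' := by
  rw [cSeq, List.mem_filter] at h
  obtain ⟨hm, hd⟩ := h
  refine ⟨@of_decide_eq_true _ (Classical.propDecidable _) hd, ?_⟩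
  rw [List.mem_map] at hm
  obtain ⟨i, hi, rfl⟩ := hm
  rw [List.mem_range'_1] at hi
  exact ⟨i, hi.1, by omega, rfl⟩

private lemma pdel_of_mem_cSeq {L : Set (List ℕ)} {n : ℕ} {π' x : List ℕ}
    (hπ' : π' ∈ SymmList n) (h : x ∈ cSeq L (n + 1) π') : pdel x = π' ∧ x ∈ L := by
  obtain ⟨hL, i, _, _, rfl⟩ := mem_cSeq h
  exact ⟨pdel_cins (by rw [symm_len hπ']; exact symm_not_mem_succ hπ') i, hL⟩

private lemma cSeq_nodup {L : Set (List ℕ)} {n : ℕ} {π' : List ℕ} (hπ' : π' ∈ SymmList n) :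
    (cSeq L (n + 1) π').Nodup := by
  apply List.Nodup.filter
  apply List.Nodup.map_on _ (List.nodup_range')
  intro i hi j hj he
  rw [List.mem_range'_1] at hi hj
  have hl : π'.length = n := symm_len hπ'
  have hnm : π'.length + 1 ∉ π' := by rw [hl]; exact symm_not_mem_succ hπ'
  exact cins_inj hnm hi.1 (by omega) hj.1 (by omega) he

private lemma Jseq_mem {n : ℕ} {L : Set (List ℕ)} (hL : IsZigzag n L) :
    ∀ x ∈ Jseq n L, x ∈ L := by
  cases hL with
  | zero =>
      intro x hx
      simp [Jseq] at hx
      simp [hx]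
  | succ n L hs hz hc =>
      intro x hx
      rw [Jseq, List.mem_flatten] at hx
      obtain ⟨b, hb, hxb⟩ := hx
      rw [List.mem_iff_getElem] at hb
      obtain ⟨m, hm, rfl⟩ := hb
      rw [List.getElem_mapIdx] at hxb
      split at hxb
      · exact (mem_cSeq (List.mem_reverse.mp hxb)).1
      · exact (mem_cSeq hxb).1

private lemma Jseq_nodup {n : ℕ} {L : Set (List ℕ)} (hL : IsZigzag n L) : (Jseq n L).Nodup := by
  induction hL with
  | zero => simp [Jseq]
  | succ n L hs hz hc ih =>
      rw [Jseq, List.nodup_flatten]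
      have hblk : ∀ m, ∀ hm : m < ((Jseq n (pdel '' L)).mapIdx
          (fun k π => if k % 2 = 0 then (cSeq L (n + 1) π).reverse
                      else cSeq L (n + 1) π)).length,
          ∀ x ∈ ((Jseq n (pdel '' L)).mapIdx
          (fun k π => if k % 2 = 0 then (cSeq L (n + 1) π).reverse
                      else cSeq L (n + 1) π))[m],
          pdel x = (Jseq n (pdel '' L))[m]'(by simpa using hm) := by
        intro m hm x hx
        rw [List.getElem_mapIdx] at hx
        have hS : (Jseq n (pdel '' L))[m]'(by simpa using hm) ∈ SymmList n :=
          zig_subset hz (Jseq_mem hz _ (List.getElem_mem _))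
        split at hx
        · exact (pdel_of_mem_cSeq hS (List.mem_reverse.mp hx)).1
        · exact (pdel_of_mem_cSeq hS hx).1
      constructor
      · intro b hb
        rw [List.mem_iff_getElem] at hb
        obtain ⟨m, hm, rfl⟩ := hb
        rw [List.getElem_mapIdx]
        have hS : (Jseq n (pdel '' L))[m]'(by simpa using hm) ∈ SymmList n :=
          zig_subset hz (Jseq_mem hz _ (List.getElem_mem _))
        split
        · exact List.nodup_reverse.mpr (cSeq_nodup hS)
        · exact cSeq_nodup hS
      · rw [List.pairwise_iff_getElem]
        intro a b ha hb hab x hxa hxb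
        have h1 := hblk a ha x hxa
        have h2 := hblk b hb x hxb
        have : (Jseq n (pdel '' L))[a]'(by simpa using ha)
            = (Jseq n (pdel '' L))[b]'(by simpa using hb) := by rw [← h1, ← h2]
        rw [ih.getElem_inj_iff] at this
        omega

private lemma flatten_adj {α : Type*} (bs : List (List α)) (k : ℕ) (x y : α)
    (hx : bs.flatten[k]? = some x) (hy : bs.flatten[k+1]? = some y) :
    (∃ i, ∃ _hi : i < bs.length, ∃ t, (bs[i])[t]? = some x ∧ (bs[i])[t+1]? = some y) ∨
    (∃ i j, ∃ _hi : i < bs.length, ∃ _hj : j < bs.length,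
      i < j ∧ x ∈ bs[i] ∧ y ∈ bs[j]) := by
  induction bs generalizing k with
  | nil => simp at hx
  | cons b rest ih =>
      rw [List.flatten_cons] at hx hy
      by_cases h1 : k + 1 < b.length
      · left
        refine ⟨0, by simp, k, ?_, ?_⟩
        · rw [List.getElem?_append, if_pos (by omega)] at hx; simpa using hx
        · rw [List.getElem?_append, if_pos h1] at hy; simpa using hy
      by_cases h2 : b.length ≤ k
      · rw [List.getElem?_append_right h2] at hx
        rw [List.getElem?_append_right (by omega)] at hy
        have hky : k + 1 - b.length = (k - b.length) + 1 := by omega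
        rw [hky] at hy
        rcases ih (k - b.length) hx hy with ⟨i, hi, t, h⟩ | ⟨i, j, hi, hj, hij, hxi, hyj⟩
        · left
          exact ⟨i + 1, by simpa using Nat.succ_lt_succ hi, t, by simpa using h⟩
        · right
          refine ⟨i + 1, j + 1, by simpa using Nat.succ_lt_succ hi,
            by simpa using Nat.succ_lt_succ hj, by omega, by simpa using hxi,
            by simpa using hyj⟩
      · right
        have hxb : x ∈ b := by
          rw [List.getElem?_append, if_pos (by omega)] at hx
          exact mem_of_getElem?' hx
        rw [List.getElem?_append_right (by omega)] at hy
        have hymem : y ∈ rest.flatten := mem_of_getElem?' hy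
        rw [List.mem_flatten] at hymem
        obtain ⟨l, hl, hyl⟩ := hymem
        rw [List.mem_iff_getElem] at hl
        obtain ⟨j, hj, rfl⟩ := hl
        exact ⟨0, j + 1, by simp, by simpa using Nat.succ_lt_succ hj,
          by omega, hxb, by simpa using hyl⟩

private lemma rightJump_pdel {n d : ℕ} {x y : List ℕ} (hx : x ∈ SymmList n)
    (hj : RightJump x y n d) : pdel x = pdel y := by
  obtain ⟨hd, A, B, C, hBl, hBlt, hxe, hye⟩ := hj
  have hlx : x.length = n := symm_len hx
  have hly : y.length = n := by
    have : x.length = y.length := by simp [hxe, hye]; omega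
    omega
  have hcount : List.count n x = 1 := by
    rw [hx.count_eq]
    refine List.count_eq_one_of_mem (List.nodup_range') ?_
    have hnx : n ∈ x := by simp [hxe]
    exact hx.subset hnx
  have hnA : n ∉ A := by
    intro hmem
    rw [hxe] at hcount
    simp [List.count_append, List.count_cons] at hcount
    have : 1 ≤ List.count n A := List.one_le_count_iff.mpr hmem
    omega
  have hnB : n ∉ B := fun hm => by have := hBlt _ hm; omega
  rw [pdel, pdel, hlx, hly, hxe, hye]
  rw [List.erase_append_right _ hnA, List.erase_cons_head]
  rw [show A ++ (B ++ n :: C) = (A ++ B) ++ n :: C by simp,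
    List.erase_append_right _ (by simp [hnA, hnB] : n ∉ A ++ B), List.erase_cons_head]
  simp

private lemma not_last_of_succ {α : Type*} {l : List α} (hn : l.Nodup) {t : ℕ} {x y : α}
    (hx : l[t]? = some x) (hy : l[t+1]? = some y) : ¬ (l.getLast? = some x) := by
  intro hlast
  rw [List.getLast?_eq_getElem?] at hlast
  obtain ⟨ht, hxe⟩ := List.getElem?_eq_some_iff.mp hx
  obtain ⟨ht1, _⟩ := List.getElem?_eq_some_iff.mp hy
  obtain ⟨hl, hle⟩ := List.getElem?_eq_some_iff.mp hlast
  have : l[t] = l[l.length - 1] := by rw [hxe, hle]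
  rw [hn.getElem_inj_iff] at this
  omega

private lemma indexOf_getElem'' {α : Type*} [BEq α] [LawfulBEq α] {l : List α} (h : l.Nodup)
    (i : ℕ) (hi : i < l.length) : l.idxOf l[i] = i := by
  induction l generalizing i with
  | nil => simp at hi
  | cons x xs ih =>
      cases i with
      | zero => simp [List.idxOf_cons]
      | succ i =>
          have hx : (x == xs[i]'(by simpa using hi)) = false := by
            rw [beq_eq_false_iff_ne]
            intro he
            have : x ∈ xs := he ▸ List.getElem_mem _
            exact (List.nodup_cons.mp h).1 this
          have hg : (x::xs)[i+1]'hi = xs[i]'(by simpa using hi) := by simp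
          rw [hg, List.idxOf_cons, hx, cond_false,
            ih (List.nodup_cons.mp h).2 i (by simpa using hi)]

end Aux

/-- Let `L_n ⊆ S_n` be a zigzag language and let `π, ρ, σ` be
three consecutive permutations in `J(L_n)`. If `ρ` is obtained from `π` by a
jump of the value `n` and `σ` is obtained from `ρ` by a jump of the value `n`,
then `s_{n,i}^ρ = s_{n,i}^π` for all `i = 1,…,n−1`. -/
theorem sVec_stable_nn (n : ℕ) (L : Set (List ℕ)) (hL : IsZigzag n L)
    (k : ℕ) (π ρ σ : List ℕ)
    (hπ : (Jseq n L)[k]? = some π) (hρ : (Jseq n L)[k + 1]? = some ρ)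
    (hσ : (Jseq n L)[k + 2]? = some σ)
    (h1 : ∃ d, LeftJump π ρ n d ∨ RightJump π ρ n d)
    (h2 : ∃ d, LeftJump ρ σ n d ∨ RightJump ρ σ n d) :
    ∀ i, 1 ≤ i → i ≤ n - 1 → sVec n L ρ i = sVec n L π i := by
  intro i hi1 hi2
  have hπL : π ∈ L := Jseq_mem hL π (mem_of_getElem?' hπ)
  have hρL : ρ ∈ L := Jseq_mem hL ρ (mem_of_getElem?' hρ)
  have hσL : σ ∈ L := Jseq_mem hL σ (mem_of_getElem?' hσ)
  have hπS : π ∈ SymmList n := zig_subset hL hπL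
  have hρS : ρ ∈ SymmList n := zig_subset hL hρL
  have hσS : σ ∈ SymmList n := zig_subset hL hσL
  obtain ⟨d1, hj1⟩ := h1
  obtain ⟨d2, hj2⟩ := h2
  have hpd1 : pdel π = pdel ρ := by
    rcases hj1 with h | h
    · replace h : RightJump ρ π n d1 := h
      exact (rightJump_pdel hρS h).symm
    · exact rightJump_pdel hπS h
  have hpd2 : pdel ρ = pdel σ := by
    rcases hj2 with h | h
    · replace h : RightJump σ ρ n d2 := h
      exact (rightJump_pdel hσS h).symm
    · exact rightJump_pdel hρS h
  have hn2 : 2 ≤ n := by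
    have key : ∀ x y : List ℕ, x ∈ SymmList n → RightJump x y n d1 → 2 ≤ n := by
      rintro x y hxS ⟨hd, A, B, C, hBl, hBlt, hxe, _⟩
      obtain ⟨w, hw⟩ := List.exists_mem_of_ne_nil B
        (List.ne_nil_of_length_pos (by omega))
      have hwx : w ∈ x := by rw [hxe]; simp [hw]
      have h1 := symm_mem hxS hwx
      have h2 := hBlt w hw
      omega
    rcases hj1 with h | h
    · exact key ρ π hρS h
    · exact key π ρ hπS h
  obtain ⟨m, rfl⟩ : ∃ m, n = m + 2 := ⟨n - 2, by omega⟩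
  have hz' : IsZigzag (m + 1) (pdel '' L) := by
    cases hL with
    | succ _ _ _ h _ => exact h
  have hnod' : (Jseq (m + 1) (pdel '' L)).Nodup := Jseq_nodup hz'
  have hJeq : Jseq (m + 2) L = ((Jseq (m + 1) (pdel '' L)).mapIdx
      (fun k π => if k % 2 = 0 then (cSeq L (m + 2) π).reverse
                  else cSeq L (m + 2) π)).flatten := by
    rw [Jseq]
  set J' : List (List ℕ) := Jseq (m + 1) (pdel '' L) with hJ'
  set bs : List (List (List ℕ)) := J'.mapIdx
      (fun k π => if k % 2 = 0 then (cSeq L (m + 2) π).reverse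
                  else cSeq L (m + 2) π) with hbs
  rw [hJeq] at hπ hρ hσ
  have hbsl : bs.length = J'.length := by rw [hbs]; exact List.length_mapIdx
  have hgeta : ∀ a, ∀ ha : a < bs.length, bs[a]'ha =
      if a % 2 = 0 then (cSeq L (m + 2) (J'[a]'(by omega))).reverse
      else cSeq L (m + 2) (J'[a]'(by omega)) := by
    intro a ha
    exact List.getElem_mapIdx
  have hblk : ∀ a, ∀ ha : a < bs.length, ∀ x ∈ bs[a],
      pdel x = J'[a]'(by omega) := by
    intro a ha x hx
    rw [hgeta a ha] at hx
    have hS : J'[a]'(by omega) ∈ SymmList (m + 1) :=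
      zig_subset hz' (Jseq_mem hz' _ (List.getElem_mem _))
    split at hx
    · exact (pdel_of_mem_cSeq hS (List.mem_reverse.mp hx)).1
    · exact (pdel_of_mem_cSeq hS hx).1
  -- block for (π, ρ)
  have hc1 : ∃ a, ∃ _ha : a < bs.length, ∃ t,
      (bs[a])[t]? = some π ∧ (bs[a])[t+1]? = some ρ := by
    rcases flatten_adj bs k π ρ hπ hρ with h | ⟨a, b, ha, hb, hab, hxa, hyb⟩
    · exact h
    · exfalso
      have e1 := hblk a ha π hxa
      have e2 := hblk b hb ρ hyb
      have : J'[a]'(by omega) = J'[b]'(by omega) := by rw [← e1, ← e2, hpd1]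
      rw [hnod'.getElem_inj_iff] at this
      omega
  have hc2 : ∃ a, ∃ _ha : a < bs.length, ∃ t,
      (bs[a])[t]? = some ρ ∧ (bs[a])[t+1]? = some σ := by
    rcases flatten_adj bs (k+1) ρ σ hρ hσ with h | ⟨a, b, ha, hb, hab, hxa, hyb⟩
    · exact h
    · exfalso
      have e1 := hblk a ha ρ hxa
      have e2 := hblk b hb σ hyb
      have : J'[a]'(by omega) = J'[b]'(by omega) := by rw [← e1, ← e2, hpd2]
      rw [hnod'.getElem_inj_iff] at this
      omega
  obtain ⟨a, ha, t, hat, hat1⟩ := hc1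
  obtain ⟨a', ha', t', hat', hat1'⟩ := hc2
  have haJ : a < J'.length := by omega
  have haJ' : a' < J'.length := by omega
  have hpa : pdel π = J'[a]'haJ := hblk a ha π (mem_of_getElem?' hat)
  have hra : pdel ρ = J'[a]'haJ := hblk a ha ρ (mem_of_getElem?' hat1)
  have hra' : pdel ρ = J'[a']'haJ' := hblk a' ha' ρ (mem_of_getElem?' hat')
  have haa : a = a' := by
    have : J'[a]'haJ = J'[a']'haJ' := by rw [← hra, ← hra']
    rwa [hnod'.getElem_inj_iff] at this
  subst haa
  -- block content
  have hSa : J'[a]'haJ ∈ SymmList (m + 1) :=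
    zig_subset hz' (Jseq_mem hz' _ (List.getElem_mem _))
  have hba : bs[a] = if a % 2 = 0 then (cSeq L (m + 2) (J'[a]'haJ)).reverse
      else cSeq L (m + 2) (J'[a]'haJ) := hgeta a ha
  have hbnd : (bs[a]'ha).Nodup := by
    rw [hba]
    split
    · exact List.nodup_reverse.mpr (cSeq_nodup hSa)
    · exact cSeq_nodup hSa
  have hidxπ : J'.idxOf (pdel π) = a := by
    rw [hpa]; exact indexOf_getElem'' hnod' a haJ
  have hidxρ : J'.idxOf (pdel ρ) = a := by
    rw [hra]; exact indexOf_getElem'' hnod' a haJ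
  have hnπ : ¬ ((if (J'.idxOf (pdel π)) % 2 = 0
      then (cSeq L (m + 2) (pdel π)).reverse
      else cSeq L (m + 2) (pdel π)).getLast? = some π) := by
    rw [hidxπ, hpa, ← hba]
    exact not_last_of_succ hbnd hat hat1
  have hnρ : ¬ ((if (J'.idxOf (pdel ρ)) % 2 = 0
      then (cSeq L (m + 2) (pdel ρ)).reverse
      else cSeq L (m + 2) (pdel ρ)).getLast? = some ρ) := by
    rw [hidxρ, hra, ← hba]
    exact not_last_of_succ hbnd hat' hat1'
  have hile : i ≤ m + 1 := by omega
  have keyπ : sVec (m + 2) L π i = sVec (m + 1) (pdel '' L) (pdel π) i := by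
    rw [sVec]
    simp only [← hJ']
    rw [if_neg hnπ, if_pos hile]
  have keyρ : sVec (m + 2) L ρ i = sVec (m + 1) (pdel '' L) (pdel ρ) i := by
    rw [sVec]
    simp only [← hJ']
    rw [if_neg hnρ, if_pos hile]
  rw [keyπ, keyρ, hpd1]
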